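/- arXiv:1909.09627 — 3 statements merged into one kernel-verified Lean document; each statement's English description precedes it below -/
import Mathlib

section
/- Let n ≥ 2, α ∈ (0,1), C ≥ 0. Let u : closure(Q⁺_{3/4}) → ℝ be continuous, vanish on Q⁰_{3/4}, and be differentiable in space and time on Q⁺_{3/4}, with the normal derivative uₙ extending continuously to the closure. Suppose there exist functions H_{n1},…,H_{n,n−1} and H̃ on Q⁰_{3/4}, each α-Hölder with constant C for the parabolic distance, such that for every (x₀,t₀) ∈ Q⁰_{3/4} and every (x,t) ∈ Q⁺_{3/4} with t ≤ t₀: |u_i(x,t) − H_{ni}(x₀,t₀) xₙ| ≤ C(|x−x₀|+|t−t₀|^{1/2})^{1+α} for each i = 1,…,n−1, and |u_t(x,t) − H̃(x₀,t₀) xₙ| ≤ C(|x−x₀|+|t−t₀|^{1/2})^{1+α}; and suppose |uₙ(x,t) − uₙ(x₀,t₀)| ≤ C(|x−x₀|+|t−t₀|^{1/2})^{α} for all (x,t) in the closure and (x₀,t₀) ∈ Q⁰_{3/4}. Then there is C′ depending only on C, α, n such that for every i = 1,…,n−1, every h with |h| ≤ 1/4 and every t ∈ (−1/16, 0]: |uₙ(h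 e_i, t) − uₙ(0,0) − h H_{ni}(0,0)| ≤ C′(|h|^{1+α} + |t|^{(1+α)/2}). In particular uₙ restricted to the flat boundary is in H^{1+α} and its tangential derivative in direction e_i equals H_{ni}. -/
open scoped BigOperators
noncomputable section

/-- Euclidean space ℝ^m. -/
abbrev En (m : ℕ) := EuclideanSpace ℝ (Fin m)

/-- m × m real matrices. -/
abbrev Mat (m : ℕ) := Matrix (Fin m) (Fin m) ℝ

variable {m n : ℕ}

/-- The parabolic distance `d((x,t),(y,s)) = |x−y| + |t−s|^(1/2)`. -/
def pdist (z w : En m × ℝ) : ℝ := dist z.1 w.1 + Real.sqrt (dist z.2 w.2)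

/-- The Pucci maximal operator `M⁺_{λ,Λ}`. -/
def pucciPlus (lam Lam : ℝ) (M : Mat m) : ℝ :=
  if h : M.IsHermitian then ∑ i, max (lam * h.eigenvalues i) (Lam * h.eigenvalues i) else 0

/-- The Pucci minimal operator `M⁻_{λ,Λ}`. -/
def pucciMinus (lam Lam : ℝ) (M : Mat m) : ℝ :=
  if h : M.IsHermitian then ∑ i, min (lam * h.eigenvalues i) (Lam * h.eigenvalues i) else 0

/-- Euclidean inner product written in coordinates. -/
def dotp (p x : En m) : ℝ := ∑ i, p i * x i

/-- The quadratic form `⟨M x, x⟩`. -/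
def qform (M : Mat m) (x : En m) : ℝ := ∑ i, ∑ j, M i j * x i * x j

/-- A fixed norm on matrices. -/
def matNorm (M : Mat m) : ℝ := ∑ i, ∑ j, |M i j|

/-- The matrix `M` acting on a Euclidean vector. -/
def mulVecE (M : Mat m) (x : En m) : En m :=
  (WithLp.equiv 2 (∀ _ : Fin m, ℝ)).symm (fun i => ∑ j, M i j * x j)

/-- Quadratic parabolic test function centered at `z₀` with jet `(p, M, τ)`. -/
def testPoly (z₀ : En m × ℝ) (p : En m) (M : Mat m) (τ : ℝ) (z : En m × ℝ) : ℝ :=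
  dotp p (z.1 - z₀.1) + (1/2) * qform M (z.1 - z₀.1) + τ * (z.2 - z₀.2)

/-- `u − φ` attains a local maximum at `z₀` within `Ω`, among earlier times. -/
def TouchAbove (Ω : Set (En m × ℝ)) (u φ : En m × ℝ → ℝ) (z₀ : En m × ℝ) : Prop :=
  ∃ r > 0, ∀ z ∈ Ω, z.2 ≤ z₀.2 → dist z z₀ < r → u z - φ z ≤ u z₀ - φ z₀

/-- `u − φ` attains a local minimum at `z₀` within `Ω`, among earlier times. -/
def TouchBelow (Ω : Set (En m × ℝ)) (u φ : En m × ℝ → ℝ) (z₀ : En m × ℝ) : Prop :=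
  ∃ r > 0, ∀ z ∈ Ω, z.2 ≤ z₀.2 → dist z z₀ < r → u z₀ - φ z₀ ≤ u z - φ z

/-- Viscosity subsolution of `−u_t + G(D²u, Du, x, t) = f` on `Ω` (tested with quadratic jets). -/
def IsViscSubsol (G : Mat m → En m → En m × ℝ → ℝ) (f : En m × ℝ → ℝ)
    (Ω : Set (En m × ℝ)) (u : En m × ℝ → ℝ) : Prop :=
  ∀ z₀ ∈ Ω, ∀ (p : En m) (M : Mat m) (τ : ℝ), M.IsHermitian →
    TouchAbove Ω u (testPoly z₀ p M τ) z₀ → f z₀ ≤ -τ + G M p z₀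

/-- Viscosity supersolution of `−u_t + G(D²u, Du, x, t) = f` on `Ω`. -/
def IsViscSupersol (G : Mat m → En m → En m × ℝ → ℝ) (f : En m × ℝ → ℝ)
    (Ω : Set (En m × ℝ)) (u : En m × ℝ → ℝ) : Prop :=
  ∀ z₀ ∈ Ω, ∀ (p : En m) (M : Mat m) (τ : ℝ), M.IsHermitian →
    TouchBelow Ω u (testPoly z₀ p M τ) z₀ → -τ + G M p z₀ ≤ f z₀

/-- Viscosity solution of `−u_t + G(D²u, Du, x, t) = f` on `Ω`. -/
def IsViscSol (G : Mat m → En m → En m × ℝ → ℝ) (f : En m × ℝ → ℝ)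
    (Ω : Set (En m × ℝ)) (u : En m × ℝ → ℝ) : Prop :=
  IsViscSubsol G f Ω u ∧ IsViscSupersol G f Ω u

/-- The Pucci class `S(λ,Λ,K;L)` on `Ω`. -/
def InPucciClass (lam Lam K L : ℝ) (Ω : Set (En m × ℝ)) (v : En m × ℝ → ℝ) : Prop :=
  IsViscSubsol (fun M p _ => pucciPlus lam Lam M + K * ‖p‖) (fun _ => -L) Ω v ∧
  IsViscSupersol (fun M p _ => pucciMinus lam Lam M - K * ‖p‖) (fun _ => L) Ω v

/-- Structure condition (H1). -/
def SatH1 (lam Lam K : ℝ) (F : Mat m → En m → En m × ℝ → ℝ) : Prop :=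
  ∀ (M N : Mat m), M.IsHermitian → N.IsHermitian → ∀ (p q : En m) (z : En m × ℝ),
    pucciMinus lam Lam (M - N) - K * ‖p - q‖ ≤ F M p z - F N q z ∧
    F M p z - F N q z ≤ pucciPlus lam Lam (M - N) + K * ‖p - q‖

/-- Structure condition (H1) for translation invariant operators. -/
def SatH1TI (lam Lam K : ℝ) (F : Mat m → En m → ℝ) : Prop :=
  ∀ (M N : Mat m), M.IsHermitian → N.IsHermitian → ∀ (p q : En m),
    pucciMinus lam Lam (M - N) - K * ‖p - q‖ ≤ F M p - F N q ∧
    F M p - F N q ≤ pucciPlus lam Lam (M - N) + K * ‖p - q‖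

/-- Condition (H2). -/
def SatH2 (abar Cbar : ℝ) (F : Mat m → En m → En m × ℝ → ℝ) : Prop :=
  ∀ (M : Mat m) (p : En m) (z w : En m × ℝ),
    |F M p z - F M p w| ≤ Cbar * (matNorm M + ‖p‖) * pdist z w ^ abar

/-- Upper half ball `B_r⁺` (the last coordinate plays the role of `xₙ`). -/
def Bplus (n : ℕ) (r : ℝ) : Set (En (n+1)) := {x | ‖x‖ < r ∧ 0 < x (Fin.last n)}

/-- Flat boundary ball `B_r⁰`. -/
def Bzero (n : ℕ) (r : ℝ) : Set (En (n+1)) := {x | ‖x‖ < r ∧ x (Fin.last n) = 0}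

/-- Half cylinder `Q_r⁺ = B_r⁺ × (−r², 0]`. -/
def Qplus (n : ℕ) (r : ℝ) : Set (En (n+1) × ℝ) :=
  {z | z.1 ∈ Bplus n r ∧ z.2 ∈ Set.Ioc (-(r^2)) 0}

/-- Flat boundary cylinder `Q_r⁰ = B_r⁰ × (−r², 0]`. -/
def Qzero (n : ℕ) (r : ℝ) : Set (En (n+1) × ℝ) :=
  {z | z.1 ∈ Bzero n r ∧ z.2 ∈ Set.Ioc (-(r^2)) 0}

/-- Parabolic cylinder `Q_r(x₀,t₀) = B_r(x₀) × (t₀ − r², t₀]`. -/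
def pCyl (z₀ : En m × ℝ) (r : ℝ) : Set (En m × ℝ) :=
  {z | dist z.1 z₀.1 < r ∧ z.2 ∈ Set.Ioc (z₀.2 - r^2) z₀.2}

/-- Strictly-earlier parabolic cylinder, used to define the parabolic boundary. -/
def pCylOpen (z₀ : En m × ℝ) (r : ℝ) : Set (En m × ℝ) :=
  {z | dist z.1 z₀.1 < r ∧ z.2 ∈ Set.Ioo (z₀.2 - r^2) z₀.2}

/-- The parabolic boundary `𝒫Ω` (Lieberman): boundary points every earlier cylinder of which
leaves `Ω`. -/
def parBdry (Ω : Set (En m × ℝ)) : Set (En m × ℝ) :=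
  {z ∈ frontier Ω | ∀ ε > 0, ¬ pCylOpen z ε ⊆ Ω}

/-- The lateral boundary `SΩ` (Lieberman). -/
def latBdry (Ω : Set (En m × ℝ)) : Set (En m × ℝ) :=
  {z ∈ parBdry Ω | ∀ ε > 0, (pCylOpen z ε ∩ Ω).Nonempty}

/-- Parabolically `α`-Hölder with constant `C` on `S`. -/
def HolderOn (C α : ℝ) (S : Set (En m × ℝ)) (v : En m × ℝ → ℝ) : Prop :=
  ∀ z ∈ S, ∀ w ∈ S, |v z - v w| ≤ C * pdist z w ^ α

/-- Parabolically `α`-Hölder vector-valued map with constant `C` on `S`. -/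
def HolderOnVec (C α : ℝ) (S : Set (En m × ℝ)) (G : En m × ℝ → En m) : Prop :=
  ∀ z ∈ S, ∀ w ∈ S, ‖G z - G w‖ ≤ C * pdist z w ^ α

/-- Parabolically `α`-Hölder matrix-valued map with constant `C` on `S`. -/
def HolderOnMat (C α : ℝ) (S : Set (En m × ℝ)) (H : En m × ℝ → Mat m) : Prop :=
  ∀ z ∈ S, ∀ w ∈ S, matNorm (H z - H w) ≤ C * pdist z w ^ α

/-- `u ∈ H^{1+α}(S)` with norm (constant) at most `C`: there is a "gradient" `G` which is
`α`-Hölder and gives uniform first-order parabolic Taylor expansions. -/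
def MemH1With (C α : ℝ) (S : Set (En m × ℝ)) (u : En m × ℝ → ℝ) : Prop :=
  ∃ G : En m × ℝ → En m,
    (∀ z ∈ S, |u z| ≤ C ∧ ‖G z‖ ≤ C) ∧
    HolderOnVec C α S G ∧
    ∀ z ∈ S, ∀ w ∈ S, |u w - u z - dotp (G z) (w.1 - z.1)| ≤ C * pdist w z ^ (1 + α)

/-- `u ∈ H^{2+α}(S)` with norm (constant) at most `C`: there are a gradient `G`, a symmetric
spatial Hessian `H`, a time derivative `T`, with `α`-Hölder `H, T` and uniform second-order
parabolic Taylor expansions. -/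
def MemH2With (C α : ℝ) (S : Set (En m × ℝ)) (u : En m × ℝ → ℝ) : Prop :=
  ∃ (G : En m × ℝ → En m) (H : En m × ℝ → Mat m) (T : En m × ℝ → ℝ),
    (∀ z ∈ S, (H z).IsHermitian ∧ |u z| ≤ C ∧ ‖G z‖ ≤ C ∧ matNorm (H z) ≤ C ∧ |T z| ≤ C) ∧
    HolderOnVec C α S G ∧ HolderOnMat C α S H ∧ HolderOn C α S T ∧
    ∀ z ∈ S, ∀ w ∈ S,
      |u w - u z - dotp (G z) (w.1 - z.1) - (1/2) * qform (H z) (w.1 - z.1)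
        - T z * (w.2 - z.2)| ≤ C * pdist w z ^ (2 + α)

/-- Drop the last coordinate. -/
def projLast (x : En (n+1)) : En n :=
  (WithLp.equiv 2 (∀ _ : Fin n, ℝ)).symm (fun i => x i.castSucc)

/-- A space-time domain is of class `H^{2+ᾱ}`: near every lateral boundary point, after a
rotation, it is the supergraph of an `H^{2+ᾱ}` function of `(x', t)`. -/
def IsH2Domain (abar : ℝ) (Ω : Set (En (n+1) × ℝ)) : Prop :=
  ∀ z₀ ∈ latBdry Ω, ∃ r > 0, ∃ R : En (n+1) ≃ₗᵢ[ℝ] En (n+1), ∃ C > 0,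
    ∃ h : En n × ℝ → ℝ,
      MemH2With C abar
        {w : En n × ℝ | dist w.1 (projLast (R z₀.1)) < r ∧ w.2 ∈ Set.Ioc (z₀.2 - r^2) z₀.2} h ∧
      Ω ∩ pCyl z₀ r = {z ∈ pCyl z₀ r | h (projLast (R z.1), z.2) < (R z.1) (Fin.last n)}

/-- `h ∈ C^{2,α}(S)` (purely spatial) with constant `C`. -/
def MemC2With (C α : ℝ) (S : Set (En m)) (h : En m → ℝ) : Prop :=
  ∃ (G : En m → En m) (Hs : En m → Mat m),
    (∀ x ∈ S, (Hs x).IsHermitian ∧ |h x| ≤ C ∧ ‖G x‖ ≤ C ∧ matNorm (Hs x) ≤ C) ∧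
    (∀ x ∈ S, ∀ y ∈ S, matNorm (Hs x - Hs y) ≤ C * ‖x - y‖ ^ α) ∧
    ∀ x ∈ S, ∀ y ∈ S,
      |h y - h x - dotp (G x) (y - x) - (1/2) * qform (Hs x) (y - x)| ≤ C * ‖y - x‖ ^ (2 + α)

/-- A spatial domain of class `C^{2,ᾱ}`. -/
def IsC2Domain (abar : ℝ) (D : Set (En (n+1))) : Prop :=
  ∀ x₀ ∈ frontier D, ∃ r > 0, ∃ R : En (n+1) ≃ₗᵢ[ℝ] En (n+1), ∃ C > 0, ∃ h : En n → ℝ,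
    MemC2With C abar {y : En n | dist y (projLast (R x₀)) < r} h ∧
    D ∩ Metric.ball x₀ r = {x ∈ Metric.ball x₀ r | h (projLast (R x)) < (R x) (Fin.last n)}

/-- A modulus of continuity. -/
def IsModulus (ρ : ℝ → ℝ) : Prop :=
  (∀ s, 0 ≤ ρ s) ∧ (∀ a b, 0 ≤ a → a ≤ b → ρ a ≤ ρ b) ∧
  Filter.Tendsto ρ (nhdsWithin 0 (Set.Ioi 0)) (nhds 0)


open Set Filter Topology in
private lemma mvt_Ioc {f f' : ℝ → ℝ} {a b K : ℝ} (hab : a < b)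
    (hca : ContinuousWithinAt f (Set.Ioc a b) a)
    (hd : ∀ s ∈ Set.Ioc a b, HasDerivAt f (f' s) s)
    (hb : ∀ s ∈ Set.Ioc a b, |f' s| ≤ K) :
    |f b - f a| ≤ K * (b - a) := by
  have step : ∀ ε ∈ Set.Ioc a b, |f b - f ε| ≤ K * (b - ε) := by
    intro ε hε
    have hsub : Set.Icc ε b ⊆ Set.Ioc a b := fun x hx => ⟨lt_of_lt_of_le hε.1 hx.1, hx.2⟩
    have := Convex.norm_image_sub_le_of_norm_hasDerivWithin_le (f := f) (f' := f')
      (s := Set.Icc ε b) (C := K)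
      (fun x hx => (hd x (hsub hx)).hasDerivWithinAt)
      (fun x hx => hb x (hsub hx)) (convex_Icc ε b)
      ⟨le_refl ε, hε.2⟩ ⟨hε.2, le_refl b⟩
    simpa [Real.norm_eq_abs, abs_of_nonneg (sub_nonneg.2 hε.2)] using this
  have hne : (𝓝[>] a).NeBot := nhdsGT_neBot_of_exists_gt ⟨b, hab⟩
  have hmem : Set.Ioc a b ∈ 𝓝[>] a := Ioc_mem_nhdsGT hab
  have htend : Filter.Tendsto f (𝓝[>] a) (𝓝 (f a)) :=
    hca.tendsto.mono_left (nhdsWithin_le_of_mem hmem)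
  have h1 : Filter.Tendsto (fun ε => |f b - f ε|) (𝓝[>] a) (𝓝 (|f b - f a|)) :=
    ((tendsto_const_nhds.sub htend).abs)
  have h2 : Filter.Tendsto (fun ε => K * (b - ε)) (𝓝[>] a) (𝓝 (K * (b - a))) :=
    Filter.Tendsto.const_mul _
      (tendsto_const_nhds.sub (tendsto_id.mono_left nhdsWithin_le_nhds))
  exact le_of_tendsto_of_tendsto h1 h2 (Filter.eventually_of_mem hmem step)

private lemma mvt_sym {f f' : ℝ → ℝ} {K : ℝ} (a : ℝ) (hK : 0 ≤ K)
    (hd : ∀ s ∈ Set.uIcc 0 a, HasDerivAt f (f' s) s)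
    (hb : ∀ s ∈ Set.uIcc 0 a, |f' s| ≤ K) :
    |f a - f 0| ≤ K * |a| := by
  rcases lt_trichotomy a 0 with hlt | heq | hgt
  · have hsub : Set.Ioc a 0 ⊆ Set.uIcc 0 a := by
      intro s hs; rw [Set.uIcc_of_ge hlt.le]; exact ⟨hs.1.le, hs.2⟩
    have ha : a ∈ Set.uIcc 0 a := Set.right_mem_uIcc
    have hm := mvt_Ioc hlt ((hd a ha).continuousAt.continuousWithinAt)
      (fun s hs => hd s (hsub hs)) (fun s hs => hb s (hsub hs))
    calc |f a - f 0| = |f 0 - f a| := abs_sub_comm _ _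
      _ ≤ K * (0 - a) := hm
      _ = K * |a| := by rw [abs_of_neg hlt]; ring
  · subst heq; simpa using mul_nonneg hK (abs_nonneg (0:ℝ))
  · have hsub : Set.Ioc 0 a ⊆ Set.uIcc 0 a := by
      intro s hs; rw [Set.uIcc_of_le hgt.le]; exact ⟨hs.1.le, hs.2⟩
    have h0 : (0:ℝ) ∈ Set.uIcc 0 a := Set.left_mem_uIcc
    have hm := mvt_Ioc hgt ((hd 0 h0).continuousAt.continuousWithinAt)
      (fun s hs => hd s (hsub hs)) (fun s hs => hb s (hsub hs))
    calc |f a - f 0| ≤ K * (a - 0) := hm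
      _ = K * |a| := by rw [abs_of_pos hgt]; ring

private lemma hasDerivAt_path {E : Type*} [NormedAddCommGroup E] [NormedSpace ℝ E]
    {u : E → ℝ} {z₀ v : E} {c s₀ : ℝ}
    (h : HasLineDerivAt ℝ u c (z₀ + s₀ • v) v) :
    HasDerivAt (fun s => u (z₀ + s • v)) c s₀ := by
  unfold HasLineDerivAt at h
  have h0 : HasDerivAt (fun τ => u (z₀ + s₀ • v + τ • v)) c (s₀ - s₀) := by
    rwa [sub_self]
  have hinner : HasDerivAt (fun y : ℝ => y - s₀) 1 s₀ := (hasDerivAt_id s₀).sub_const s₀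
  have hcomp : HasDerivAt ((fun τ => u (z₀ + s₀ • v + τ • v)) ∘ (fun y : ℝ => y - s₀))
      (c * 1) s₀ := HasDerivAt.comp s₀ h0 hinner
  rw [mul_one] at hcomp
  convert hcomp using 2 with s
  simp only [Function.comp]
  congr 1
  rw [add_assoc, ← add_smul]
  congr 1
  ring_nf

private lemma abs4 {w x y z : ℝ} : |w + x + y - z| ≤ |w| + |x| + |y| + |z| := by
  rw [sub_eq_add_neg]
  refine le_trans (abs_add_le _ _) ?_
  rw [abs_neg]
  have h2 := abs_add_le (w + x) y
  have h3 := abs_add_le w x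
  linarith

set_option maxHeartbeats 4000000
/-- from first order expansions of the tangential derivatives `u_i` and of `u_t`
at the flat boundary (with boundary coefficients `H_{ni}`, `H̃`) together with the Hölder
continuity of `uₙ` up to the boundary, one deduces that `uₙ` restricted to the flat boundary is
`H^{1+α}`:  `|uₙ(h e_i, t) − uₙ(0,0) − h H_{ni}(0,0)| ≤ C′(|h|^{1+α} + |t|^{(1+α)/2})`. -/
theorem stmt10 (n : ℕ) (α C : ℝ) (hn : 1 ≤ n) (hα : 0 < α) (hα1 : α < 1) (hC : 0 ≤ C) :
    ∃ C' : ℝ, 0 < C' ∧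
    ∀ (u un ut : En (n+1) × ℝ → ℝ) (ui : Fin n → En (n+1) × ℝ → ℝ)
      (Hni : Fin n → En (n+1) × ℝ → ℝ) (Htil : En (n+1) × ℝ → ℝ),
      ContinuousOn u (closure (Qplus n (3/4))) →
      (∀ z ∈ Qzero n (3/4), u z = 0) →
      (∀ z ∈ Qplus n (3/4),
        (∀ i : Fin n, HasLineDerivAt ℝ u (ui i z) z (EuclideanSpace.single i.castSucc 1, 0)) ∧
        HasLineDerivAt ℝ u (un z) z (EuclideanSpace.single (Fin.last n) 1, 0) ∧
        HasLineDerivAt ℝ u (ut z) z ((0 : En (n+1)), (1 : ℝ))) →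
      ContinuousOn un (closure (Qplus n (3/4))) →
      (∀ i : Fin n, HolderOn C α (Qzero n (3/4)) (Hni i)) →
      HolderOn C α (Qzero n (3/4)) Htil →
      (∀ (i : Fin n), ∀ z₀ ∈ Qzero n (3/4), ∀ z ∈ Qplus n (3/4), z.2 ≤ z₀.2 →
        |ui i z - Hni i z₀ * z.1 (Fin.last n)| ≤ C * pdist z z₀ ^ (1 + α)) →
      (∀ z₀ ∈ Qzero n (3/4), ∀ z ∈ Qplus n (3/4), z.2 ≤ z₀.2 →
        |ut z - Htil z₀ * z.1 (Fin.last n)| ≤ C * pdist z z₀ ^ (1 + α)) →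
      (∀ z₀ ∈ Qzero n (3/4), ∀ z ∈ closure (Qplus n (3/4)),
        |un z - un z₀| ≤ C * pdist z z₀ ^ α) →
      ∀ (i : Fin n) (h t : ℝ), |h| ≤ 1/4 → -(1/16) < t → t ≤ 0 →
        |un (EuclideanSpace.single i.castSucc h, t) - un ((0 : En (n+1)), (0:ℝ))
          - h * Hni i ((0 : En (n+1)), (0:ℝ))|
          ≤ C' * (|h| ^ (1 + α) + |t| ^ ((1 + α)/2)) := by
  refine ⟨34 * C + 1, by linarith, ?_⟩
  intro u un ut ui Hni Htil hu hu0 hderiv huncont hHolHni hHolHtil hui hut hunH i h t hh ht1 ht2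
  set eI : En (n+1) := EuclideanSpace.single i.castSucc 1 with heI
  set eN : En (n+1) := EuclideanSpace.single (Fin.last n) 1 with heN
  have heNlast : eN (Fin.last n) = 1 := by simp [heN, EuclideanSpace.single_apply]
  have heIlast : eI (Fin.last n) = 0 := by
    simp [heI, EuclideanSpace.single_apply, (Fin.castSucc_lt_last i).ne, (Fin.castSucc_lt_last i).ne']
  have hnormeI : ‖eI‖ = 1 := by simp [heI, EuclideanSpace.norm_single]
  have hnormeN : ‖eN‖ = 1 := by simp [heN, EuclideanSpace.norm_single]
  have happly : ∀ (a b : ℝ), (a • eI + b • eN) (Fin.last n) = a * eI (Fin.last n) + b * eN (Fin.last n) := by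
    intro a b; rfl
  have hcomb_last : ∀ a b : ℝ, (a • eI + b • eN) (Fin.last n) = b := by
    intro a b; rw [happly, heIlast, heNlast]; ring
  have hnorm_comb : ∀ a b : ℝ, ‖a • eI + b • eN‖ ≤ |a| + |b| := by
    intro a b
    calc ‖a • eI + b • eN‖ ≤ ‖a • eI‖ + ‖b • eN‖ := norm_add_le _ _
      _ = |a| + |b| := by
          rw [norm_smul, norm_smul, hnormeI, hnormeN, Real.norm_eq_abs, Real.norm_eq_abs]; ring
  have hQp : ∀ a b s : ℝ, |a| ≤ 1/4 → 0 < b → b ≤ 1/4 → -(1/4) ≤ s → s ≤ 0 →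
      ((a • eI + b • eN, s) : En (n+1) × ℝ) ∈ Qplus n (3/4) := by
    intro a b s ha hb0 hb hs0 hs1
    refine ⟨⟨?_, ?_⟩, ?_, hs1⟩
    · calc ‖a • eI + b • eN‖ ≤ |a| + |b| := hnorm_comb a b
        _ < 3/4 := by rw [abs_of_pos hb0]; linarith
    · show 0 < (a • eI + b • eN) (Fin.last n)
      rw [hcomb_last]; exact hb0
    · have he : -((3/4:ℝ)^2) = -(9/16) := by norm_num
      rw [he]; linarith
  have hQz : ∀ a s : ℝ, |a| ≤ 1/4 → -(1/4) ≤ s → s ≤ 0 →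
      ((a • eI, s) : En (n+1) × ℝ) ∈ Qzero n (3/4) := by
    intro a s ha hs0 hs1
    refine ⟨⟨?_, ?_⟩, ?_, hs1⟩
    · rw [norm_smul, hnormeI, mul_one, Real.norm_eq_abs]; linarith
    · show (a • eI) (Fin.last n) = 0
      have h1 : (a • eI) (Fin.last n) = a * eI (Fin.last n) := rfl
      rw [h1, heIlast, mul_zero]
    · have he : -((3/4:ℝ)^2) = -(9/16) := by norm_num
      rw [he]; linarith
  have hQcl : ∀ a s : ℝ, |a| ≤ 1/4 → -(1/4) ≤ s → s ≤ 0 →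
      ((a • eI, s) : En (n+1) × ℝ) ∈ closure (Qplus n (3/4)) := by
    intro a s ha hs0 hs1
    have hcont : Continuous (fun b : ℝ => ((a • eI + b • eN, s) : En (n+1) × ℝ)) :=
      (continuous_const.add (continuous_id.smul continuous_const)).prodMk continuous_const
    have htend : Filter.Tendsto (fun b : ℝ => ((a • eI + b • eN, s) : En (n+1) × ℝ))
        (nhdsWithin 0 (Set.Ioi 0)) (nhds ((a • eI, s) : En (n+1) × ℝ)) := by
      have := (hcont.tendsto 0).mono_left (nhdsWithin_le_nhds (s := Set.Ioi (0:ℝ)))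
      simpa using this
    exact mem_closure_of_tendsto htend (Filter.eventually_of_mem
      (Ioo_mem_nhdsGT_of_mem ⟨le_refl (0:ℝ), by norm_num⟩ : Set.Ioo (0:ℝ) (1/4) ∈ _)
      (fun b hb => hQp a b s ha hb.1 hb.2.le hs0 hs1))
  have hpd_vert : ∀ a b s : ℝ, 0 ≤ b →
      pdist ((a • eI + b • eN, s) : En (n+1) × ℝ) ((a • eI, s) : En (n+1) × ℝ) = b := by
    intro a b s hb
    simp [pdist, dist_eq_norm, add_sub_cancel_left, norm_smul, hnormeN, abs_of_nonneg hb]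
  have hpd_time : ∀ (x : En (n+1)) (s s' : ℝ),
      pdist ((x, s) : En (n+1) × ℝ) ((x, s') : En (n+1) × ℝ) = Real.sqrt |s - s'| := by
    intro x s s'; simp [pdist, Real.dist_eq]
  have key : ∀ a τ : ℝ, |a| ≤ 1/4 → -(1/16) ≤ τ → τ ≤ 0 →
      |un ((a • eI, τ) : En (n+1) × ℝ) - un ((0:En (n+1)), (0:ℝ))
        - a * Hni i ((0:En (n+1)), τ) - τ * Htil ((0:En (n+1)), (0:ℝ))|
      ≤ C * |a| ^ α * |a| + C * (Real.sqrt |τ|) ^ α * |τ| := by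
    intro a τ ha hτ0 hτ1
    have hτ4 : -(1/4:ℝ) ≤ τ := by linarith
    have hT0 : (0:ℝ) ≤ Real.sqrt |τ| := Real.sqrt_nonneg _
    have dclaim : ∀ δ : ℝ, δ ∈ Set.Ioc (0:ℝ) (1/4) →
        |un ((a • eI, τ) : En (n+1) × ℝ) - un ((0:En (n+1)), (0:ℝ))
          - a * Hni i ((0:En (n+1)), τ) - τ * Htil ((0:En (n+1)), (0:ℝ))|
        ≤ (2*C + C*|a| + C*|τ|) * δ ^ α + C * |a| ^ α * |a| + C * (Real.sqrt |τ|) ^ α * |τ| := by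
      intro δ hδmem
      obtain ⟨hδ0, hδ4⟩ := hδmem
      have hδpow : δ ^ (1+α) = δ ^ α * δ := by
        rw [Real.rpow_add hδ0, Real.rpow_one]; ring
      have vert : ∀ a' τ' : ℝ, |a'| ≤ 1/4 → -(1/4) ≤ τ' → τ' ≤ 0 →
          |u ((a' • eI + δ • eN, τ') : En (n+1) × ℝ) - δ * un ((a' • eI, τ') : En (n+1) × ℝ)|
            ≤ C * δ ^ α * δ := by
        intro a' τ' ha' hτ'0 hτ'1
        have hmemz : ((a' • eI, τ') : En (n+1) × ℝ) ∈ Qzero n (3/4) := hQz a' τ' ha' hτ'0 hτ'1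
        have hmemc : ((a' • eI, τ') : En (n+1) × ℝ) ∈ closure (Qplus n (3/4)) :=
          hQcl a' τ' ha' hτ'0 hτ'1
        have hmemp : ∀ s : ℝ, s ∈ Set.Ioc (0:ℝ) δ →
            ((a' • eI + s • eN, τ') : En (n+1) × ℝ) ∈ Qplus n (3/4) :=
          fun s hs => hQp a' s τ' ha' hs.1 (hs.2.trans hδ4) hτ'0 hτ'1
        have hca : ContinuousWithinAt
            (fun s : ℝ => u ((a' • eI + s • eN, τ') : En (n+1) × ℝ)
              - s * un ((a' • eI, τ') : En (n+1) × ℝ)) (Set.Ioc 0 δ) 0 := by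
          apply ContinuousWithinAt.sub
          · have hpathc : Continuous (fun s : ℝ => ((a' • eI + s • eN, τ') : En (n+1) × ℝ)) :=
              (continuous_const.add (continuous_id.smul continuous_const)).prodMk continuous_const
            have hucw : ContinuousWithinAt u (closure (Qplus n (3/4)))
                ((a' • eI + (0:ℝ) • eN, τ') : En (n+1) × ℝ) := by
              rw [zero_smul, add_zero]; exact hu.continuousWithinAt hmemc
            exact ContinuousWithinAt.comp hucw hpathc.continuousWithinAt
              (fun s hs => subset_closure (hmemp s hs))
          · exact (continuous_id.mul continuous_const).continuousWithinAt
        have hd : ∀ s ∈ Set.Ioc (0:ℝ) δ, HasDerivAt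
            (fun s : ℝ => u ((a' • eI + s • eN, τ') : En (n+1) × ℝ)
              - s * un ((a' • eI, τ') : En (n+1) × ℝ))
            (un ((a' • eI + s • eN, τ') : En (n+1) × ℝ)
              - un ((a' • eI, τ') : En (n+1) × ℝ)) s := by
          intro s hs
          have hl := (hderiv _ (hmemp s hs)).2.1
          have hl' : HasLineDerivAt ℝ u (un ((a' • eI + s • eN, τ') : En (n+1) × ℝ))
              (((a' • eI, τ') : En (n+1) × ℝ) + s • ((eN, 0) : En (n+1) × ℝ))
              ((eN, (0:ℝ)) : En (n+1) × ℝ) := by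
            have he : (((a' • eI, τ') : En (n+1) × ℝ) + s • ((eN, 0) : En (n+1) × ℝ))
                = ((a' • eI + s • eN, τ') : En (n+1) × ℝ) := by
              simp [Prod.ext_iff]
            rw [he]; exact hl
          have hres := hasDerivAt_path hl'
          have hfun : (fun r : ℝ => u (((a' • eI, τ') : En (n+1) × ℝ)
                + r • ((eN, 0) : En (n+1) × ℝ)))
              = fun r : ℝ => u ((a' • eI + r • eN, τ') : En (n+1) × ℝ) := by
            funext r; congr 1; simp [Prod.ext_iff]
          rw [hfun] at hres
          exact hres.sub (hasDerivAt_mul_const _)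
        have hbb : ∀ s ∈ Set.Ioc (0:ℝ) δ,
            |un ((a' • eI + s • eN, τ') : En (n+1) × ℝ)
              - un ((a' • eI, τ') : En (n+1) × ℝ)| ≤ C * δ ^ α := by
          intro s hs
          have h1 := hunH _ hmemz _ (subset_closure (hmemp s hs))
          rw [hpd_vert a' s τ' hs.1.le] at h1
          calc |un ((a' • eI + s • eN, τ') : En (n+1) × ℝ)
              - un ((a' • eI, τ') : En (n+1) × ℝ)| ≤ C * s ^ α := h1
            _ ≤ C * δ ^ α :=
              mul_le_mul_of_nonneg_left (Real.rpow_le_rpow hs.1.le hs.2 hα.le) hC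
        have hmvt := mvt_Ioc hδ0 hca hd hbb
        have hzero : u ((a' • eI, τ') : En (n+1) × ℝ) = 0 := hu0 _ hmemz
        simp only [zero_smul, add_zero, zero_mul, sub_zero, hzero] at hmvt
        exact hmvt
      have hor : |u ((a • eI + δ • eN, τ) : En (n+1) × ℝ) - u (((0:ℝ) • eI + δ • eN, τ) : En (n+1) × ℝ)
          - a * (δ * Hni i ((0:En (n+1)), τ))|
          ≤ (C * δ ^ α * δ + C * |a| ^ α * δ) * |a| := by
        have hQz0τ : ((0:En (n+1)), τ) ∈ Qzero n (3/4) := by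
          have := hQz 0 τ (by norm_num) hτ4 hτ1; rwa [zero_smul] at this
        have hKnn : 0 ≤ C * δ ^ α * δ + C * |a| ^ α * δ :=
          add_nonneg (mul_nonneg (mul_nonneg hC (Real.rpow_nonneg hδ0.le α)) hδ0.le)
            (mul_nonneg (mul_nonneg hC (Real.rpow_nonneg (abs_nonneg a) α)) hδ0.le)
        have habs_le : ∀ s : ℝ, s ∈ Set.uIcc (0:ℝ) a → |s| ≤ |a| := by
          intro s hs
          rcases Set.mem_uIcc.mp hs with h1 | h1
          · rw [abs_of_nonneg h1.1]; exact le_trans h1.2 (le_abs_self a)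
          · rw [abs_of_nonpos h1.2]; exact le_trans (neg_le_neg h1.1) (neg_le_abs a)
        have hmems : ∀ s : ℝ, s ∈ Set.uIcc (0:ℝ) a →
            ((s • eI + δ • eN, τ) : En (n+1) × ℝ) ∈ Qplus n (3/4) :=
          fun s hs => hQp s δ τ ((habs_le s hs).trans ha) hδ0 hδ4 hτ4 hτ1
        have hd : ∀ s ∈ Set.uIcc (0:ℝ) a, HasDerivAt
            (fun s : ℝ => u ((s • eI + δ • eN, τ) : En (n+1) × ℝ)
              - u (((0:ℝ) • eI + δ • eN, τ) : En (n+1) × ℝ)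
              - s * (δ * Hni i ((0:En (n+1)), τ)))
            (ui i ((s • eI + δ • eN, τ) : En (n+1) × ℝ) - δ * Hni i ((0:En (n+1)), τ)) s := by
          intro s hs
          have hl := (hderiv _ (hmems s hs)).1 i
          have hl' : HasLineDerivAt ℝ u (ui i ((s • eI + δ • eN, τ) : En (n+1) × ℝ))
              (((δ • eN, τ) : En (n+1) × ℝ) + s • ((eI, 0) : En (n+1) × ℝ))
              ((eI, (0:ℝ)) : En (n+1) × ℝ) := by
            have he : (((δ • eN, τ) : En (n+1) × ℝ) + s • ((eI, 0) : En (n+1) × ℝ))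
                = ((s • eI + δ • eN, τ) : En (n+1) × ℝ) := by
              simp [Prod.ext_iff, add_comm]
            rw [he]; exact hl
          have hres := hasDerivAt_path hl'
          have hfun : (fun r : ℝ => u (((δ • eN, τ) : En (n+1) × ℝ)
                + r • ((eI, 0) : En (n+1) × ℝ)))
              = fun r : ℝ => u ((r • eI + δ • eN, τ) : En (n+1) × ℝ) := by
            funext r; congr 1; simp [Prod.ext_iff, add_comm]
          rw [hfun] at hres
          exact (hres.sub_const _).sub (hasDerivAt_mul_const _)
        have hb : ∀ s ∈ Set.uIcc (0:ℝ) a,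
            |ui i ((s • eI + δ • eN, τ) : En (n+1) × ℝ) - δ * Hni i ((0:En (n+1)), τ)|
              ≤ C * δ ^ α * δ + C * |a| ^ α * δ := by
          intro s hs
          have hs4 := (habs_le s hs).trans ha
          have hQzs : ((s • eI, τ) : En (n+1) × ℝ) ∈ Qzero n (3/4) := hQz s τ hs4 hτ4 hτ1
          have h1 := hui i _ hQzs _ (hmems s hs) (le_refl τ)
          rw [(show (((s • eI + δ • eN, τ) : En (n+1) × ℝ)).1 (Fin.last n) = δ from hcomb_last s δ),
            (show pdist ((s • eI + δ • eN, τ) : En (n+1) × ℝ) ((s • eI, τ) : En (n+1) × ℝ) = δ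
              from hpd_vert s δ τ hδ0.le), hδpow] at h1
          have h2 := hHolHni i _ hQzs _ hQz0τ
          rw [(show pdist ((s • eI, τ) : En (n+1) × ℝ) ((0:En (n+1)), τ) = |s| by
            simp [pdist, dist_eq_norm, norm_smul, hnormeI])] at h2
          have h3 : |s| ^ α ≤ |a| ^ α := Real.rpow_le_rpow (abs_nonneg s) (habs_le s hs) hα.le
          have hdecomp : ui i ((s • eI + δ • eN, τ) : En (n+1) × ℝ)
                - δ * Hni i ((0:En (n+1)), τ)
              = (ui i ((s • eI + δ • eN, τ) : En (n+1) × ℝ)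
                  - Hni i ((s • eI, τ) : En (n+1) × ℝ) * δ)
                + (Hni i ((s • eI, τ) : En (n+1) × ℝ) - Hni i ((0:En (n+1)), τ)) * δ := by ring
          rw [hdecomp]
          refine le_trans (abs_add_le _ _) ?_
          have h4 : |(Hni i ((s • eI, τ) : En (n+1) × ℝ) - Hni i ((0:En (n+1)), τ)) * δ|
              ≤ C * |a| ^ α * δ := by
            rw [abs_mul, abs_of_pos hδ0]
            refine mul_le_mul_of_nonneg_right (le_trans h2 ?_) hδ0.le
            exact mul_le_mul_of_nonneg_left h3 hC
          have h5 : C * (δ ^ α * δ) = C * δ ^ α * δ := by ring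
          linarith
        have hmvt := mvt_sym a hKnn hd hb
        simp only [sub_self, zero_mul, sub_zero] at hmvt
        exact hmvt
      have tim : |u (((0:ℝ) • eI + δ • eN, τ) : En (n+1) × ℝ) - u (((0:ℝ) • eI + δ • eN, 0) : En (n+1) × ℝ)
          - τ * (δ * Htil ((0:En (n+1)), (0:ℝ)))|
          ≤ (C * δ ^ α * δ + C * (Real.sqrt |τ|) ^ α * δ) * |τ| := by
        have hQz00' : ((0:En (n+1)), (0:ℝ)) ∈ Qzero n (3/4) := by
          have := hQz 0 0 (by norm_num) (by norm_num) le_rfl; rwa [zero_smul] at this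
        have hKnn : 0 ≤ C * δ ^ α * δ + C * (Real.sqrt |τ|) ^ α * δ :=
          add_nonneg (mul_nonneg (mul_nonneg hC (Real.rpow_nonneg hδ0.le α)) hδ0.le)
            (mul_nonneg (mul_nonneg hC (Real.rpow_nonneg (Real.sqrt_nonneg _) α)) hδ0.le)
        have hsbd : ∀ s : ℝ, s ∈ Set.uIcc (0:ℝ) τ → τ ≤ s ∧ s ≤ 0 := by
          intro s hs
          rw [Set.uIcc_of_ge hτ1] at hs; exact ⟨hs.1, hs.2⟩
        have hmems : ∀ s : ℝ, s ∈ Set.uIcc (0:ℝ) τ →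
            (((0:ℝ) • eI + δ • eN, s) : En (n+1) × ℝ) ∈ Qplus n (3/4) :=
          fun s hs => hQp 0 δ s (by norm_num) hδ0 hδ4 (le_trans hτ4 (hsbd s hs).1) (hsbd s hs).2
        have hd : ∀ s ∈ Set.uIcc (0:ℝ) τ, HasDerivAt
            (fun s : ℝ => u (((0:ℝ) • eI + δ • eN, s) : En (n+1) × ℝ)
              - u (((0:ℝ) • eI + δ • eN, 0) : En (n+1) × ℝ)
              - s * (δ * Htil ((0:En (n+1)), (0:ℝ))))
            (ut (((0:ℝ) • eI + δ • eN, s) : En (n+1) × ℝ)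
              - δ * Htil ((0:En (n+1)), (0:ℝ))) s := by
          intro s hs
          have hl := (hderiv _ (hmems s hs)).2.2
          have hl' : HasLineDerivAt ℝ u (ut (((0:ℝ) • eI + δ • eN, s) : En (n+1) × ℝ))
              ((((0:ℝ) • eI + δ • eN, (0:ℝ)) : En (n+1) × ℝ)
                + s • (((0:En (n+1)), (1:ℝ)) : En (n+1) × ℝ))
              (((0:En (n+1)), (1:ℝ)) : En (n+1) × ℝ) := by
            have he : ((((0:ℝ) • eI + δ • eN, (0:ℝ)) : En (n+1) × ℝ)
                + s • (((0:En (n+1)), (1:ℝ)) : En (n+1) × ℝ))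
                = (((0:ℝ) • eI + δ • eN, s) : En (n+1) × ℝ) := by
              simp [Prod.ext_iff]
            rw [he]; exact hl
          have hres := hasDerivAt_path hl'
          have hfun : (fun r : ℝ => u ((((0:ℝ) • eI + δ • eN, (0:ℝ)) : En (n+1) × ℝ)
                + r • (((0:En (n+1)), (1:ℝ)) : En (n+1) × ℝ)))
              = fun r : ℝ => u (((0:ℝ) • eI + δ • eN, r) : En (n+1) × ℝ) := by
            funext r; congr 1; simp [Prod.ext_iff]
          rw [hfun] at hres
          exact (hres.sub_const _).sub (hasDerivAt_mul_const _)
        have hb : ∀ s ∈ Set.uIcc (0:ℝ) τ,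
            |ut (((0:ℝ) • eI + δ • eN, s) : En (n+1) × ℝ) - δ * Htil ((0:En (n+1)), (0:ℝ))|
              ≤ C * δ ^ α * δ + C * (Real.sqrt |τ|) ^ α * δ := by
          intro s hs
          obtain ⟨hsτ, hs0⟩ := hsbd s hs
          have hQzs : ((0:En (n+1)), s) ∈ Qzero n (3/4) := by
            have := hQz 0 s (by norm_num) (le_trans hτ4 hsτ) hs0; rwa [zero_smul] at this
          have h1 := hut _ hQzs _ (hmems s hs) (le_refl s)
          rw [(show ((((0:ℝ) • eI + δ • eN, s) : En (n+1) × ℝ)).1 (Fin.last n) = δ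
              from hcomb_last 0 δ),
            (show pdist (((0:ℝ) • eI + δ • eN, s) : En (n+1) × ℝ) ((0:En (n+1)), s) = δ by
              simp [pdist, dist_eq_norm, norm_smul, hnormeN, abs_of_pos hδ0]), hδpow] at h1
          have h2 := hHolHtil _ hQzs _ hQz00'
          rw [(show pdist (((0:En (n+1)), s) : En (n+1) × ℝ) ((0:En (n+1)), (0:ℝ))
              = Real.sqrt |s| by simpa using hpd_time (0:En (n+1)) s 0)] at h2
          have h3 : Real.sqrt |s| ^ α ≤ Real.sqrt |τ| ^ α := by
            refine Real.rpow_le_rpow (Real.sqrt_nonneg _) (Real.sqrt_le_sqrt ?_) hα.le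
            rw [abs_of_nonpos hs0, abs_of_nonpos hτ1]; linarith
          have hdecomp : ut (((0:ℝ) • eI + δ • eN, s) : En (n+1) × ℝ)
                - δ * Htil ((0:En (n+1)), (0:ℝ))
              = (ut (((0:ℝ) • eI + δ • eN, s) : En (n+1) × ℝ)
                  - Htil ((0:En (n+1)), s) * δ)
                + (Htil ((0:En (n+1)), s) - Htil ((0:En (n+1)), (0:ℝ))) * δ := by ring
          rw [hdecomp]
          refine le_trans (abs_add_le _ _) ?_
          have h4 : |(Htil ((0:En (n+1)), s) - Htil ((0:En (n+1)), (0:ℝ))) * δ|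
              ≤ C * (Real.sqrt |τ|) ^ α * δ := by
            rw [abs_mul, abs_of_pos hδ0]
            refine mul_le_mul_of_nonneg_right (le_trans h2 ?_) hδ0.le
            exact mul_le_mul_of_nonneg_left h3 hC
          have h5 : C * (δ ^ α * δ) = C * δ ^ α * δ := by ring
          linarith
        have hmvt := mvt_sym τ hKnn hd hb
        simp only [sub_self, zero_mul, sub_zero] at hmvt
        exact hmvt
      -- assembly
      have e1 := vert a τ ha hτ4 hτ1
      have e2 := vert 0 0 (by norm_num) (by norm_num) le_rfl
      simp only [zero_smul, zero_add] at e2 hor tim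
      have comb : δ * (un ((a • eI, τ) : En (n+1) × ℝ) - un ((0:En (n+1)), (0:ℝ))
            - a * Hni i ((0:En (n+1)), τ) - τ * Htil ((0:En (n+1)), (0:ℝ)))
          = -(u ((a • eI + δ • eN, τ) : En (n+1) × ℝ) - δ * un ((a • eI, τ) : En (n+1) × ℝ))
            + (u ((δ • eN, 0) : En (n+1) × ℝ) - δ * un ((0:En (n+1)), (0:ℝ)))
            + (u ((a • eI + δ • eN, τ) : En (n+1) × ℝ) - u ((δ • eN, τ) : En (n+1) × ℝ)
                - a * (δ * Hni i ((0:En (n+1)), τ)))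
            - (u ((δ • eN, 0) : En (n+1) × ℝ) - u ((δ • eN, τ) : En (n+1) × ℝ)
                + τ * (δ * Htil ((0:En (n+1)), (0:ℝ)))) := by ring
      have tim' : |u ((δ • eN, 0) : En (n+1) × ℝ) - u ((δ • eN, τ) : En (n+1) × ℝ)
          + τ * (δ * Htil ((0:En (n+1)), (0:ℝ)))|
          ≤ (C * δ ^ α * δ + C * (Real.sqrt |τ|) ^ α * δ) * |τ| := by
        have heq : u ((δ • eN, 0) : En (n+1) × ℝ) - u ((δ • eN, τ) : En (n+1) × ℝ)
            + τ * (δ * Htil ((0:En (n+1)), (0:ℝ)))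
            = -(u ((δ • eN, τ) : En (n+1) × ℝ) - u ((δ • eN, 0) : En (n+1) × ℝ)
                - τ * (δ * Htil ((0:En (n+1)), (0:ℝ)))) := by ring
        rw [heq, abs_neg]; exact tim
      have habs : δ * |un ((a • eI, τ) : En (n+1) × ℝ) - un ((0:En (n+1)), (0:ℝ))
            - a * Hni i ((0:En (n+1)), τ) - τ * Htil ((0:En (n+1)), (0:ℝ))|
          ≤ C * δ ^ α * δ + C * δ ^ α * δ + (C * δ ^ α * δ + C * |a| ^ α * δ) * |a|
            + (C * δ ^ α * δ + C * (Real.sqrt |τ|) ^ α * δ) * |τ| := by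
        have habs0 : |δ * (un ((a • eI, τ) : En (n+1) × ℝ) - un ((0:En (n+1)), (0:ℝ))
              - a * Hni i ((0:En (n+1)), τ) - τ * Htil ((0:En (n+1)), (0:ℝ)))|
            ≤ C * δ ^ α * δ + C * δ ^ α * δ + (C * δ ^ α * δ + C * |a| ^ α * δ) * |a|
              + (C * δ ^ α * δ + C * (Real.sqrt |τ|) ^ α * δ) * |τ| := by
          rw [comb]
          refine le_trans abs4 ?_
          rw [abs_neg]
          exact add_le_add (add_le_add (add_le_add e1 e2) hor) tim'
        rwa [abs_mul, abs_of_pos hδ0] at habs0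
      have h2 : δ * |un ((a • eI, τ) : En (n+1) × ℝ) - un ((0:En (n+1)), (0:ℝ))
            - a * Hni i ((0:En (n+1)), τ) - τ * Htil ((0:En (n+1)), (0:ℝ))|
          ≤ δ * ((2*C + C*|a| + C*|τ|) * δ ^ α + C * |a| ^ α * |a|
              + C * (Real.sqrt |τ|) ^ α * |τ|) := by
        refine le_trans habs (le_of_eq ?_); ring
      exact le_of_mul_le_mul_left h2 hδ0
    -- limit δ → 0⁺
    have h1 : Filter.Tendsto (fun δ : ℝ => δ ^ α) (nhdsWithin 0 (Set.Ioi 0)) (nhds 0) := by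
      have hc : ContinuousAt (fun x : ℝ => x ^ α) 0 := Real.continuousAt_rpow_const 0 α (Or.inr hα.le)
      have := hc.tendsto.mono_left (nhdsWithin_le_nhds (s := Set.Ioi (0:ℝ)))
      rwa [Real.zero_rpow hα.ne'] at this
    have h2 : Filter.Tendsto (fun δ : ℝ => (2*C + C*|a| + C*|τ|) * δ ^ α + C * |a| ^ α * |a|
          + C * (Real.sqrt |τ|) ^ α * |τ|) (nhdsWithin 0 (Set.Ioi 0))
        (nhds ((2*C + C*|a| + C*|τ|) * 0 + C * |a| ^ α * |a| + C * (Real.sqrt |τ|) ^ α * |τ|)) :=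
      ((h1.const_mul _).add tendsto_const_nhds).add tendsto_const_nhds
    rw [mul_zero, zero_add] at h2
    exact ge_of_tendsto h2 (Filter.eventually_of_mem
      (Ioc_mem_nhdsGT (by norm_num : (0:ℝ) < 1/4)) dclaim)
  -- membership of basic boundary points
  have hQz00 : ((0:En (n+1)), (0:ℝ)) ∈ Qzero n (3/4) := by
    have := hQz 0 0 (by norm_num) (by norm_num) le_rfl; rwa [zero_smul] at this
  have hsq : Real.sqrt (1/16 : ℝ) = 1/4 := by
    rw [(show (1/16:ℝ) = (1/4)^2 by norm_num), Real.sqrt_sq (by norm_num : (0:ℝ) ≤ 1/4)]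
  have hquarter : ((1:ℝ)/4) ^ α ≤ 1 :=
    Real.rpow_le_one (by norm_num) (by norm_num) hα.le
  -- bound on |Htil (0,0)|
  have htilbd : |Htil ((0:En (n+1)), (0:ℝ))| ≤ 32 * C := by
    have hk0 := key 0 (-(1/16)) (by norm_num) (by norm_num) (by norm_num)
    have hcl16 : (((0:En (n+1)), -(1/16:ℝ)) : En (n+1) × ℝ) ∈ closure (Qplus n (3/4)) := by
      have := hQcl 0 (-(1/16)) (by norm_num) (by norm_num) (by norm_num)
      rwa [zero_smul] at this
    have hun16 : |un (((0:En (n+1)), -(1/16:ℝ)) : En (n+1) × ℝ)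
        - un ((0:En (n+1)), (0:ℝ))| ≤ C * ((1:ℝ)/4) ^ α := by
      have := hunH _ hQz00 _ hcl16
      rw [show pdist (((0:En (n+1)), -(1/16:ℝ)) : En (n+1) × ℝ) ((0:En (n+1)), (0:ℝ))
          = (1:ℝ)/4 by
        rw [hpd_time (0:En (n+1)) (-(1/16)) 0]
        rw [(show |(-(1/16:ℝ)) - 0| = 1/16 by norm_num), hsq]] at this
      exact this
    have hk0' : |un (((0:En (n+1)), -(1/16:ℝ)) : En (n+1) × ℝ) - un ((0:En (n+1)), (0:ℝ))
        + (1/16) * Htil ((0:En (n+1)), (0:ℝ))| ≤ C * ((1:ℝ)/4) ^ α * (1/16) := by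
      have he1 : un (((0:ℝ) • eI, -(1/16:ℝ)) : En (n+1) × ℝ) - un ((0:En (n+1)), (0:ℝ))
          - 0 * Hni i ((0:En (n+1)), -(1/16)) - (-(1/16)) * Htil ((0:En (n+1)), (0:ℝ))
          = un (((0:ℝ) • eI, -(1/16:ℝ)) : En (n+1) × ℝ) - un ((0:En (n+1)), (0:ℝ))
            + (1/16) * Htil ((0:En (n+1)), (0:ℝ)) := by ring
      rw [he1] at hk0
      rw [(show |(-(1/16:ℝ))| = 1/16 by norm_num)] at hk0
      rw [hsq] at hk0
      simp only [zero_smul, abs_zero, mul_zero, zero_add] at hk0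
      exact hk0
    have htri : |(1/16 : ℝ) * Htil ((0:En (n+1)), (0:ℝ))|
        ≤ C * ((1:ℝ)/4) ^ α * (1/16) + C * ((1:ℝ)/4) ^ α := by
      have heq : (1/16 : ℝ) * Htil ((0:En (n+1)), (0:ℝ))
          = (un (((0:En (n+1)), -(1/16:ℝ)) : En (n+1) × ℝ) - un ((0:En (n+1)), (0:ℝ))
              + (1/16) * Htil ((0:En (n+1)), (0:ℝ)))
            - (un (((0:En (n+1)), -(1/16:ℝ)) : En (n+1) × ℝ)
              - un ((0:En (n+1)), (0:ℝ))) := by ring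
      rw [heq, sub_eq_add_neg]
      refine le_trans (abs_add_le _ _) ?_
      rw [abs_neg]
      exact add_le_add hk0' hun16
    rw [abs_mul, (show |(1/16:ℝ)| = 1/16 by norm_num)] at htri
    have hCq : C * ((1:ℝ)/4) ^ α ≤ C := by
      calc C * ((1:ℝ)/4) ^ α ≤ C * 1 := mul_le_mul_of_nonneg_left hquarter hC
        _ = C := mul_one C
    linarith
  -- final assembly
  have hEq : EuclideanSpace.single i.castSucc h = h • eI := by
    rw [heI]
    ext j
    simp [EuclideanSpace.single_apply, PiLp.smul_apply, smul_eq_mul, mul_ite, mul_one, mul_zero]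
  rw [hEq]
  have hQz0t : ((0:En (n+1)), t) ∈ Qzero n (3/4) := by
    have := hQz 0 t (by norm_num) (by linarith) ht2; rwa [zero_smul] at this
  have hk := key h t hh (le_of_lt ht1) ht2
  have hHol' : |Hni i ((0:En (n+1)), t) - Hni i ((0:En (n+1)), (0:ℝ))|
      ≤ C * (Real.sqrt |t|) ^ α := by
    have := hHolHni i _ hQz0t _ hQz00
    rw [(show pdist (((0:En (n+1)), t) : En (n+1) × ℝ) ((0:En (n+1)), (0:ℝ))
        = Real.sqrt |t| by simpa using hpd_time (0:En (n+1)) t 0)] at this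
    exact this
  set T := Real.sqrt |t| with hTdef
  have hT0 : (0:ℝ) ≤ T := Real.sqrt_nonneg _
  have ht16 : |t| ≤ 1/16 := by rw [abs_of_nonpos ht2]; linarith
  have hT1 : T ≤ 1 := by
    rw [hTdef]
    calc Real.sqrt |t| ≤ Real.sqrt (1/16) := Real.sqrt_le_sqrt ht16
      _ = 1/4 := hsq
      _ ≤ 1 := by norm_num
  have habs_t : |t| = T^2 := by rw [hTdef, Real.sq_sqrt (abs_nonneg t)]
  have hne1α : (1:ℝ) + α ≠ 0 := by positivity
  have hhpow : |h| ^ α * |h| = |h| ^ (1+α) := by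
    rw [Real.rpow_add' (abs_nonneg h) hne1α, Real.rpow_one]; ring
  have hTpow : T ^ α * T = T ^ (1+α) := by
    rw [Real.rpow_add' hT0 hne1α, Real.rpow_one]; ring
  have hTt : |t| ^ ((1+α)/2) = T ^ (1+α) := by
    rw [habs_t, ← Real.rpow_natCast T 2, ← Real.rpow_mul hT0]
    congr 1
    push_cast
    ring
  have hT2le : T ^ 2 ≤ T ^ (1+α) := by
    rw [← Real.rpow_natCast T 2]
    exact Real.rpow_le_rpow_of_exponent_ge' hT0 hT1 (by positivity) (by push_cast; linarith)
  have hT2' : T ^ α * |t| ≤ T ^ (1+α) := by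
    calc T ^ α * |t| = T ^ α * T ^ 2 := by rw [habs_t]
      _ ≤ T ^ α * T := by
          refine mul_le_mul_of_nonneg_left ?_ (Real.rpow_nonneg hT0 α)
          nlinarith
      _ = T ^ (1+α) := hTpow
  have hmix : |h| * T ^ α ≤ |h| ^ (1+α) + T ^ (1+α) := by
    rcases le_total |h| T with hle | hle
    · calc |h| * T ^ α ≤ T * T ^ α :=
            mul_le_mul_of_nonneg_right hle (Real.rpow_nonneg hT0 α)
        _ = T ^ (1+α) := by rw [← hTpow]; ring
        _ ≤ |h| ^ (1+α) + T ^ (1+α) :=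
            le_add_of_nonneg_left (Real.rpow_nonneg (abs_nonneg h) _)
    · calc |h| * T ^ α ≤ |h| * |h| ^ α :=
            mul_le_mul_of_nonneg_left (Real.rpow_le_rpow hT0 hle hα.le) (abs_nonneg h)
        _ = |h| ^ (1+α) := by rw [← hhpow]; ring
        _ ≤ |h| ^ (1+α) + T ^ (1+α) := le_add_of_nonneg_right (Real.rpow_nonneg hT0 _)
  have hdecomp : un ((h • eI, t) : En (n+1) × ℝ) - un ((0:En (n+1)), (0:ℝ))
      - h * Hni i ((0:En (n+1)), (0:ℝ))
      = (un ((h • eI, t) : En (n+1) × ℝ) - un ((0:En (n+1)), (0:ℝ))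
          - h * Hni i ((0:En (n+1)), t) - t * Htil ((0:En (n+1)), (0:ℝ)))
        + h * (Hni i ((0:En (n+1)), t) - Hni i ((0:En (n+1)), (0:ℝ)))
        + t * Htil ((0:En (n+1)), (0:ℝ)) := by ring
  rw [hdecomp, hTt]
  have tri : ∀ x y z : ℝ, |x + y + z| ≤ |x| + |y| + |z| := by
    intro x y z
    refine le_trans (abs_add_le _ _) (add_le_add_left (abs_add_le _ _) _)
  have t2 : |h * (Hni i ((0:En (n+1)), t) - Hni i ((0:En (n+1)), (0:ℝ)))|
      ≤ |h| * (C * T ^ α) := by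
    rw [abs_mul]; exact mul_le_mul_of_nonneg_left hHol' (abs_nonneg h)
  have t3 : |t * Htil ((0:En (n+1)), (0:ℝ))| ≤ |t| * (32 * C) := by
    rw [abs_mul]; exact mul_le_mul_of_nonneg_left htilbd (abs_nonneg t)
  have t4 : |t| ≤ T ^ (1+α) := by rw [habs_t]; exact hT2le
  have e1 : C * |h| ^ α * |h| = C * |h| ^ (1+α) := by rw [← hhpow]; ring
  have e2 : C * T ^ α * |t| ≤ C * T ^ (1+α) := by
    calc C * T ^ α * |t| = C * (T ^ α * |t|) := by ring
      _ ≤ C * T ^ (1+α) := mul_le_mul_of_nonneg_left hT2' hC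
  have e3 : |h| * (C * T ^ α) ≤ C * (|h| ^ (1+α) + T ^ (1+α)) := by
    calc |h| * (C * T ^ α) = C * (|h| * T ^ α) := by ring
      _ ≤ C * (|h| ^ (1+α) + T ^ (1+α)) := mul_le_mul_of_nonneg_left hmix hC
  have e4 : |t| * (32 * C) ≤ 32 * C * T ^ (1+α) := by
    calc |t| * (32 * C) = (32 * C) * |t| := by ring
      _ ≤ (32 * C) * T ^ (1+α) := mul_le_mul_of_nonneg_left t4 (by linarith)
  have nA : (0:ℝ) ≤ |h| ^ (1+α) := Real.rpow_nonneg (abs_nonneg h) _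
  have nB : (0:ℝ) ≤ T ^ (1+α) := Real.rpow_nonneg hT0 _
  have nCA : (0:ℝ) ≤ C * |h| ^ (1+α) := mul_nonneg hC nA
  have nCB : (0:ℝ) ≤ C * T ^ (1+α) := mul_nonneg hC nB
  have htri2 := tri (un ((h • eI, t) : En (n+1) × ℝ) - un ((0:En (n+1)), (0:ℝ))
      - h * Hni i ((0:En (n+1)), t) - t * Htil ((0:En (n+1)), (0:ℝ)))
    (h * (Hni i ((0:En (n+1)), t) - Hni i ((0:En (n+1)), (0:ℝ))))
    (t * Htil ((0:En (n+1)), (0:ℝ)))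
  nlinarith [hk, htri2, t2, t3, e1, e2, e3, e4, nA, nB, nCA, nCB]

end
end

section
/- Let F satisfy (H1) and (H2). For every N ∈ Sym(n), p ∈ ℝⁿ and (x,t), let a(N,p,x,t) denote the unique real number with F(N + a eₙ⊗eₙ, p, x, t) = 0 (which exists and is unique by (H1)). Then for all N₁, N₂ ∈ Sym(n), p₁, p₂ ∈ ℝⁿ and points (x₁,t₁), (x₂,t₂): |a(N₁,p₁,x₁,t₁) − a(N₂,p₂,x₂,t₂)| ≤ λ^{−1}[ nΛ‖N₁−N₂‖ + K|p₁−p₂| + C̄(‖N₂ + a(N₂,p₂,x₂,t₂) eₙ⊗eₙ‖ + |p₂|)(|x₁−x₂| + |t₁−t₂|^{1/2})^{ᾱ} ]. In particular, if (N,p) ranges over parabolically α-Hölder continuous and bounded functions of a boundary point, then the root a is parabolically min(α,ᾱ)-Hölder continuous. -/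
open scoped BigOperators
noncomputable section

variable {m n : ℕ}

namespace Stmt13Aux

lemma sum_eig {m : ℕ} (A : Mat m) (hA : A.IsHermitian) :
    ∑ i, hA.eigenvalues i = A.trace := by
  rw [hA.trace_eq_sum_eigenvalues]
  simp

lemma eig_abs_le {m : ℕ} (A : Mat m) (hA : A.IsHermitian) (i : Fin m) :
    |hA.eigenvalues i| ≤ matNorm A := by
  have h := hA.eigenvalues_eq i
  set v := hA.eigenvectorBasis i with hv
  have hnorm : ‖v‖ = 1 := hA.eigenvectorBasis.orthonormal.1 i
  have hsum : ∑ j, ‖v j‖ ^ 2 = 1 := by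
    have h2 := EuclideanSpace.norm_eq v
    rw [hnorm] at h2
    have := Real.sq_sqrt (Finset.sum_nonneg (fun j (_ : j ∈ Finset.univ) => sq_nonneg ‖v j‖))
    rw [← h2] at this; simpa using this.symm
  have hcoord : ∀ j, |v j| ≤ 1 := by
    intro j
    have h1 : ‖v j‖ ^ 2 ≤ 1 := by
      rw [← hsum]
      exact Finset.single_le_sum (f := fun j => ‖v j‖ ^ 2) (fun j _ => sq_nonneg _)
        (Finset.mem_univ j)
    nlinarith [abs_nonneg (v j), (Real.norm_eq_abs (v j)).symm]
  rw [h]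
  simp only [RCLike.star_def, RCLike.re_to_real]
  have heq : dotProduct (star v.ofLp) (A.mulVec v.ofLp)
      = ∑ j, ∑ k, v j * (A j k * v k) := by
    simp [dotProduct, Matrix.mulVec, Finset.mul_sum]
  rw [heq]
  calc |∑ j, ∑ k, v j * (A j k * v k)| ≤ ∑ j, ∑ k, |v j * (A j k * v k)| := by
        refine (Finset.abs_sum_le_sum_abs _ _).trans ?_
        exact Finset.sum_le_sum fun j _ => Finset.abs_sum_le_sum_abs _ _
    _ ≤ ∑ j, ∑ k, |A j k| := by
        refine Finset.sum_le_sum fun j _ => Finset.sum_le_sum fun k _ => ?_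
        rw [abs_mul, abs_mul]
        calc |v j| * (|A j k| * |v k|) ≤ 1 * (|A j k| * 1) := by
              apply mul_le_mul (hcoord j) ?_ (by positivity) zero_le_one
              exact mul_le_mul_of_nonneg_left (hcoord k) (abs_nonneg _)
          _ = |A j k| := by ring
    _ = matNorm A := rfl

lemma matNorm_nonneg {m : ℕ} (A : Mat m) : 0 ≤ matNorm A :=
  Finset.sum_nonneg fun _ _ => Finset.sum_nonneg fun _ _ => abs_nonneg _

lemma matNorm_sub_comm {m : ℕ} (A B : Mat m) : matNorm (A - B) = matNorm (B - A) := by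
  unfold matNorm
  refine Finset.sum_congr rfl fun i _ => Finset.sum_congr rfl fun j _ => ?_
  simp [Matrix.sub_apply, abs_sub_comm]

lemma stdHerm {n : ℕ} (s : ℝ) :
    (s • Matrix.single (Fin.last n) (Fin.last n) (1:ℝ)).IsHermitian := by
  rw [Matrix.IsHermitian, Matrix.conjTranspose_eq_transpose_of_trivial,
    Matrix.transpose_smul]
  congr 1
  ext i j
  simp [Matrix.single, Matrix.transpose_apply, and_comm]

lemma pucciPlus_le {m : ℕ} {lam Lam : ℝ} (hlam : 0 ≤ lam) (hll : lam ≤ Lam)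
    {A : Mat m} (hA : A.IsHermitian) :
    pucciPlus lam Lam A ≤ (m : ℝ) * Lam * matNorm A := by
  rw [pucciPlus, dif_pos hA]
  calc ∑ i, max (lam * hA.eigenvalues i) (Lam * hA.eigenvalues i)
      ≤ ∑ _i : Fin m, Lam * matNorm A := by
        refine Finset.sum_le_sum fun i _ => ?_
        have he := eig_abs_le A hA i
        have hL : 0 ≤ Lam := hlam.trans hll
        rcases le_or_gt 0 (hA.eigenvalues i) with h | h
        · rw [max_eq_right (by nlinarith)]
          nlinarith [le_abs_self (hA.eigenvalues i)]
        · rw [max_eq_left (by nlinarith)]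
          nlinarith [matNorm_nonneg A]
    _ = (m : ℝ) * Lam * matNorm A := by
        rw [Finset.sum_const, Finset.card_univ, Fintype.card_fin, nsmul_eq_mul]; ring

lemma pucciMinus_ge {m : ℕ} {lam Lam : ℝ} (hlam : 0 ≤ lam) (hll : lam ≤ Lam)
    {A : Mat m} (hA : A.IsHermitian) :
    -((m : ℝ) * Lam * matNorm A) ≤ pucciMinus lam Lam A := by
  rw [pucciMinus, dif_pos hA]
  have hmain : ∑ _i : Fin m, -(Lam * matNorm A)
      ≤ ∑ i, min (lam * hA.eigenvalues i) (Lam * hA.eigenvalues i) := by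
        refine Finset.sum_le_sum fun i _ => ?_
        have he := eig_abs_le A hA i
        have hL : 0 ≤ Lam := hlam.trans hll
        have habs := neg_abs_le (hA.eigenvalues i)
        rcases le_or_gt 0 (hA.eigenvalues i) with h | h
        · rw [min_eq_left (by nlinarith)]
          nlinarith [matNorm_nonneg A]
        · rw [min_eq_right (by nlinarith)]
          nlinarith
  calc -((m : ℝ) * Lam * matNorm A) = ∑ _i : Fin m, -(Lam * matNorm A) := by
        rw [Finset.sum_const, Finset.card_univ, Fintype.card_fin, nsmul_eq_mul]; ring
    _ ≤ _ := hmain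

lemma pucciMinus_smul {n : ℕ} {lam Lam s : ℝ} (hlam : 0 ≤ lam) (hll : lam ≤ Lam) (hs : 0 ≤ s) :
    pucciMinus lam Lam (s • Matrix.single (Fin.last n) (Fin.last n) (1:ℝ)) = lam * s := by
  have hEH := stdHerm (n := n) s
  have hPSD : (s • Matrix.single (Fin.last n) (Fin.last n) (1:ℝ)).PosSemidef := by
    refine Matrix.PosSemidef.of_dotProduct_mulVec_nonneg hEH fun x => ?_
    rw [Matrix.smul_mulVec, Matrix.single_mulVec]
    have heq : dotProduct (star x) (s • Function.update (0 : Fin (n+1) → ℝ) (Fin.last n)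
        (1 * x (Fin.last n))) = s * (x (Fin.last n) * x (Fin.last n)) := by
      simp [dotProduct, Function.update_apply, mul_ite]
      ring
    rw [heq]
    nlinarith [sq_nonneg (x (Fin.last n))]
  rw [pucciMinus, dif_pos hEH]
  have hnn := hPSD.eigenvalues_nonneg
  have heq : ∀ i, min (lam * hEH.eigenvalues i) (Lam * hEH.eigenvalues i)
      = lam * hEH.eigenvalues i := fun i => min_eq_left (by nlinarith [hnn i])
  rw [Finset.sum_congr rfl fun i _ => heq i, ← Finset.mul_sum, sum_eig _ hEH]
  congr 1
  rw [Matrix.trace_smul]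
  simp [Matrix.trace, Matrix.diag, Matrix.single]

end Stmt13Aux

/-- Hölder-type continuity of the root `a(N,p,x,t)` of
`F(N + a eₙ⊗eₙ, p, x, t) = 0` in all of its arguments, for `F` satisfying (H1) and (H2). -/
theorem stmt13 (n : ℕ) (lam Lam K abar Cbar : ℝ)
    (hlam : 0 < lam) (hll : lam ≤ Lam) (hK : 0 ≤ K) (habar : 0 < abar) (hCbar : 0 < Cbar)
    (F : Mat (n+1) → En (n+1) → En (n+1) × ℝ → ℝ)
    (hH1 : SatH1 lam Lam K F) (hH2 : SatH2 abar Cbar F)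
    (a : Mat (n+1) → En (n+1) → En (n+1) × ℝ → ℝ)
    (ha : ∀ (N : Mat (n+1)) (p : En (n+1)) (z : En (n+1) × ℝ), N.IsHermitian →
      F (N + a N p z • Matrix.single (Fin.last n) (Fin.last n) (1:ℝ)) p z = 0) :
    ∀ (N₁ N₂ : Mat (n+1)) (p₁ p₂ : En (n+1)) (z₁ z₂ : En (n+1) × ℝ),
      N₁.IsHermitian → N₂.IsHermitian →
      |a N₁ p₁ z₁ - a N₂ p₂ z₂| ≤
        lam⁻¹ * (((n+1 : ℕ) : ℝ) * Lam * matNorm (N₁ - N₂) + K * ‖p₁ - p₂‖ +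
          Cbar * (matNorm (N₂ + a N₂ p₂ z₂ •
              Matrix.single (Fin.last n) (Fin.last n) (1:ℝ)) + ‖p₂‖)
            * pdist z₁ z₂ ^ abar) := by
  classical
  intro N₁ N₂ p₁ p₂ z₁ z₂ hN₁ hN₂
  open Stmt13Aux in
  set E : Mat (n+1) := Matrix.single (Fin.last n) (Fin.last n) (1:ℝ) with hE
  set a₁ := a N₁ p₁ z₁ with ha₁
  set a₂ := a N₂ p₂ z₂ with ha₂
  set A : ℝ := ((n+1 : ℕ) : ℝ) * Lam * matNorm (N₁ - N₂) with hAdef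
  set B : ℝ := K * ‖p₁ - p₂‖ +
    Cbar * (matNorm (N₂ + a₂ • E) + ‖p₂‖) * pdist z₁ z₂ ^ abar with hBdef
  have hlam' : (0:ℝ) ≤ lam := hlam.le
  have hF1 : F (N₁ + a₁ • E) p₁ z₁ = 0 := ha N₁ p₁ z₁ hN₁
  have hF2 : F (N₂ + a₂ • E) p₂ z₂ = 0 := ha N₂ p₂ z₂ hN₂
  have hHerm : ∀ (N : Mat (n+1)), N.IsHermitian → ∀ s : ℝ, (N + s • E).IsHermitian :=
    fun N hN s => hN.add (Stmt13Aux.stdHerm s)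
  -- monotone growth in the last diagonal entry
  have hg : ∀ s t : ℝ, s ≤ t →
      lam * (t - s) ≤ F (N₂ + t • E) p₁ z₁ - F (N₂ + s • E) p₁ z₁ := by
    intro s t hst
    have h1 := (hH1 (N₂ + t • E) (N₂ + s • E) (hHerm _ hN₂ t) (hHerm _ hN₂ s) p₁ p₁ z₁).1
    have hsub : (N₂ + t • E) - (N₂ + s • E) = (t - s) • E := by
      rw [add_sub_add_left_eq_sub, ← sub_smul]
    rw [hsub, Stmt13Aux.pucciMinus_smul hlam' hll (by linarith)] at h1
    simpa using h1
  -- bound |F (N₂ + a₁ • E) p₁ z₁| ≤ A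
  have hApos : 0 ≤ A := by
    have := Stmt13Aux.matNorm_nonneg (N₁ - N₂)
    have hL : (0:ℝ) ≤ Lam := hlam'.trans hll
    positivity
  have hsub21 : (N₂ + a₁ • E) - (N₁ + a₁ • E) = N₂ - N₁ := by abel
  have hsub12 : (N₁ + a₁ • E) - (N₂ + a₁ • E) = N₁ - N₂ := by abel
  have hAup : F (N₂ + a₁ • E) p₁ z₁ ≤ A := by
    have h1 := (hH1 (N₂ + a₁ • E) (N₁ + a₁ • E) (hHerm _ hN₂ a₁) (hHerm _ hN₁ a₁) p₁ p₁ z₁).2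
    rw [hsub21, hF1] at h1
    have h2 := Stmt13Aux.pucciPlus_le hlam' hll (hN₂.sub hN₁)
    rw [Stmt13Aux.matNorm_sub_comm N₂ N₁] at h2
    simp only [sub_zero, sub_self, norm_zero, mul_zero] at h1
    calc F (N₂ + a₁ • E) p₁ z₁ ≤ pucciPlus lam Lam (N₂ - N₁) + K * ‖(0:En (n+1))‖ := by
          simpa using h1
      _ ≤ A := by simpa [hAdef] using h2
  have hAlo : -A ≤ F (N₂ + a₁ • E) p₁ z₁ := by
    have h1 := (hH1 (N₁ + a₁ • E) (N₂ + a₁ • E) (hHerm _ hN₁ a₁) (hHerm _ hN₂ a₁) p₁ p₁ z₁).2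
    rw [hsub12, hF1] at h1
    have h2 := Stmt13Aux.pucciPlus_le hlam' hll (hN₁.sub hN₂)
    have : -(F (N₂ + a₁ • E) p₁ z₁) ≤ pucciPlus lam Lam (N₁ - N₂) + K * ‖p₁ - p₁‖ := by
      simpa using h1
    simp only [sub_self, norm_zero, mul_zero, add_zero] at this
    have := this.trans (by simpa [hAdef] using h2)
    linarith
  -- bound |F (N₂ + a₂ • E) p₁ z₁| ≤ B
  have hB : |F (N₂ + a₂ • E) p₁ z₁| ≤ B := by
    have hHM := hHerm _ hN₂ a₂
    have hp1 := (hH1 (N₂ + a₂ • E) (N₂ + a₂ • E) hHM hHM p₁ p₂ z₁).2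
    have hp2 := (hH1 (N₂ + a₂ • E) (N₂ + a₂ • E) hHM hHM p₂ p₁ z₁).2
    have h0 : pucciPlus lam Lam ((N₂ + a₂ • E) - (N₂ + a₂ • E)) ≤ 0 := by
      rw [sub_self]
      have h2 := Stmt13Aux.pucciPlus_le hlam' hll (A := (0 : Mat (n+1)))
        (by simp [Matrix.IsHermitian])
      have h3 : matNorm (0 : Mat (n+1)) = 0 := by simp [matNorm]
      rw [h3] at h2; simpa using h2
    have hp : |F (N₂ + a₂ • E) p₁ z₁ - F (N₂ + a₂ • E) p₂ z₁| ≤ K * ‖p₁ - p₂‖ := by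
      rw [abs_le]
      constructor
      · have : F (N₂ + a₂ • E) p₂ z₁ - F (N₂ + a₂ • E) p₁ z₁ ≤ K * ‖p₁ - p₂‖ := by
          have := hp2
          rw [norm_sub_rev] at this
          linarith
        linarith
      · linarith [hp1]
    have hz := hH2 (N₂ + a₂ • E) p₂ z₁ z₂
    rw [hF2] at hz
    rw [sub_zero] at hz
    calc |F (N₂ + a₂ • E) p₁ z₁|
        ≤ |F (N₂ + a₂ • E) p₁ z₁ - F (N₂ + a₂ • E) p₂ z₁| + |F (N₂ + a₂ • E) p₂ z₁| := by
          have := abs_sub_abs_le_abs_sub (F (N₂ + a₂ • E) p₁ z₁) (F (N₂ + a₂ • E) p₂ z₁)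
          linarith [abs_nonneg (F (N₂ + a₂ • E) p₂ z₁)]
      _ ≤ K * ‖p₁ - p₂‖ + Cbar * (matNorm (N₂ + a₂ • E) + ‖p₂‖) * pdist z₁ z₂ ^ abar :=
          add_le_add hp hz
      _ = B := rfl
  have hBpos : 0 ≤ B := le_trans (abs_nonneg _) hB
  -- combine
  have hkey : lam * |a₁ - a₂| ≤ A + B := by
    rcases le_total a₂ a₁ with h | h
    · rw [abs_of_nonneg (by linarith)]
      have h1 := hg a₂ a₁ h
      have h2 : F (N₂ + a₂ • E) p₁ z₁ ≥ -B := by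
        have := (abs_le.mp hB).1; linarith
      linarith [hAup]
    · rw [abs_of_nonpos (by linarith)]
      have h1 := hg a₁ a₂ h
      have h2 : F (N₂ + a₂ • E) p₁ z₁ ≤ B := (abs_le.mp hB).2
      linarith [hAlo]
  have : |a₁ - a₂| ≤ lam⁻¹ * (A + B) := by
    rw [le_inv_mul_iff₀ hlam]
    linarith [hkey]
  calc |a₁ - a₂| ≤ lam⁻¹ * (A + B) := this
    _ = lam⁻¹ * (((n+1 : ℕ) : ℝ) * Lam * matNorm (N₁ - N₂) + K * ‖p₁ - p₂‖ +
          Cbar * (matNorm (N₂ + a₂ • E) + ‖p₂‖) * pdist z₁ z₂ ^ abar) := by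
        rw [hAdef, hBdef]; ring


end
end

section
/- Let n ≥ 1, γ, β ∈ (0,1), C > 0 and let u : Q₁⁺ → ℝ. Suppose there exist sequences A_k ∈ ℝ and H_k ∈ Sym(n), k ≥ 0, such that for every k: |A_k − A_{k+1}| ≤ C γ^{k(1+β)}, |H_k − H_{k+1}| ≤ C γ^{kβ}, and sup_{(x,t) ∈ Q⁺_{γ^k}} |u(x,t) − A_k xₙ − ⟨H_k x, x⟩| ≤ γ^{k(2+β)}. Then the limits A_∞ = lim A_k and H_∞ = lim H_k exist, and there is a constant C′ depending only on C, γ, β such that for all (x,t) ∈ Q₁⁺: |u(x,t) − A_∞ xₙ − ⟨H_∞ x, x⟩| ≤ C′ (|x| + |t|^{1/2})^{2+β}. -/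
open scoped BigOperators
noncomputable section

variable {m n : ℕ}

private lemma qform_sub' {m : ℕ} (M N : Mat m) (x : En m) :
    qform (M - N) x = qform M x - qform N x := by
  simp only [qform, Matrix.sub_apply, sub_mul, Finset.sum_sub_distrib]

private lemma abs_coord_le_norm' {m : ℕ} (x : En m) (i : Fin m) : |x i| ≤ ‖x‖ := by
  rw [EuclideanSpace.norm_eq, show |x i| = Real.sqrt (x i ^ 2) by rw [Real.sqrt_sq_eq_abs]]
  apply Real.sqrt_le_sqrt
  have h : x i ^ 2 ≤ ∑ j, x j ^ 2 :=
    Finset.single_le_sum (fun j _ => sq_nonneg (x j)) (Finset.mem_univ i)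
  simpa [Real.norm_eq_abs, sq_abs] using h

private lemma abs_qform_le' {m : ℕ} (M : Mat m) (x : En m) :
    |qform M x| ≤ matNorm M * ‖x‖ ^ 2 := by
  have h : ∀ i j : Fin m, |M i j * x i * x j| ≤ |M i j| * ‖x‖ ^ 2 := by
    intro i j
    rw [abs_mul, abs_mul, sq]
    have h2 : |x i| * |x j| ≤ ‖x‖ * ‖x‖ :=
      mul_le_mul (abs_coord_le_norm' x i) (abs_coord_le_norm' x j) (abs_nonneg _) (norm_nonneg _)
    calc |M i j| * |x i| * |x j| = |M i j| * (|x i| * |x j|) := by ring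
    _ ≤ |M i j| * (‖x‖ * ‖x‖) := mul_le_mul_of_nonneg_left h2 (abs_nonneg _)
  calc |qform M x| ≤ ∑ i, |∑ j, M i j * x i * x j| := Finset.abs_sum_le_sum_abs _ _
  _ ≤ ∑ i, ∑ j, |M i j * x i * x j| :=
      Finset.sum_le_sum fun i _ => Finset.abs_sum_le_sum_abs _ _
  _ ≤ ∑ i, ∑ j, |M i j| * ‖x‖ ^ 2 :=
      Finset.sum_le_sum fun i _ => Finset.sum_le_sum fun j _ => h i j
  _ = matNorm M * ‖x‖ ^ 2 := by
      rw [matNorm, Finset.sum_mul]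
      exact Finset.sum_congr rfl fun i _ => (Finset.sum_mul _ _ _).symm

private lemma abs_entry_le_matNorm' {m : ℕ} (M : Mat m) (i j : Fin m) :
    |M i j| ≤ matNorm M := by
  have h1 : |M i j| ≤ ∑ j', |M i j'| :=
    Finset.single_le_sum (f := fun j' => |M i j'|) (fun _ _ => abs_nonneg _)
      (Finset.mem_univ j)
  have h2 : ∑ j', |M i j'| ≤ ∑ i', ∑ j', |M i' j'| :=
    Finset.single_le_sum (f := fun i' => ∑ j', |M i' j'|)
      (fun i' _ => Finset.sum_nonneg fun _ _ => abs_nonneg _) (Finset.mem_univ i)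
  exact h1.trans h2

/-- the real-analysis iteration lemma.  Geometric convergence of the
approximating jets `(A_k, H_k)` on the dyadic half cylinders `Q⁺_{γ^k}` yields limits
`(A_∞, H_∞)` and a pointwise `H^{2+β}` decay estimate on `Q₁⁺`. -/
theorem stmt14 (n : ℕ) (γ β C : ℝ)
    (hγ : γ ∈ Set.Ioo (0:ℝ) 1) (hβ : β ∈ Set.Ioo (0:ℝ) 1) (hC : 0 < C) :
    ∃ C' : ℝ, 0 < C' ∧
    ∀ (u : En (n+1) × ℝ → ℝ) (A : ℕ → ℝ) (H : ℕ → Mat (n+1)),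
      (∀ k, (H k).IsHermitian) →
      (∀ k : ℕ, |A k - A (k+1)| ≤ C * γ ^ ((k : ℝ) * (1 + β))) →
      (∀ k : ℕ, matNorm (H k - H (k+1)) ≤ C * γ ^ ((k : ℝ) * β)) →
      (∀ k : ℕ, ∀ z ∈ Qplus n (γ ^ k),
        |u z - A k * z.1 (Fin.last n) - qform (H k) z.1| ≤ γ ^ ((k : ℝ) * (2 + β))) →
      ∃ (Ainf : ℝ) (Hinf : Mat (n+1)),
        Filter.Tendsto A Filter.atTop (nhds Ainf) ∧
        Filter.Tendsto H Filter.atTop (nhds Hinf) ∧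
        ∀ z ∈ Qplus n 1,
          |u z - Ainf * z.1 (Fin.last n) - qform Hinf z.1|
            ≤ C' * (‖z.1‖ + Real.sqrt |z.2|) ^ (2 + β) := by
  obtain ⟨hγ0, hγ1⟩ := hγ
  obtain ⟨hβ0, hβ1⟩ := hβ
  have pow_eq1 : ∀ (c : ℝ) (k : ℕ), γ ^ ((k : ℝ) * c) = ((γ : ℝ) ^ (c : ℝ)) ^ k := by
    intro c k
    rw [mul_comm, Real.rpow_mul hγ0.le, Real.rpow_natCast]
  have pow_eq2 : ∀ (c : ℝ) (k : ℕ), γ ^ ((k : ℝ) * c) = ((γ : ℝ) ^ k : ℝ) ^ (c : ℝ) := by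
    intro c k
    rw [← Real.rpow_natCast γ k, ← Real.rpow_mul hγ0.le]
  set r1 : ℝ := γ ^ ((1 : ℝ) + β) with hr1def
  set rb : ℝ := γ ^ (β : ℝ) with hrbdef
  have hr1pos : 0 < r1 := Real.rpow_pos_of_pos hγ0 _
  have hr1lt : r1 < 1 := Real.rpow_lt_one hγ0.le hγ1 (by linarith)
  have hrbpos : 0 < rb := Real.rpow_pos_of_pos hγ0 _
  have hrblt : rb < 1 := Real.rpow_lt_one hγ0.le hγ1 hβ0
  set D1 : ℝ := C / (1 - r1) with hD1def
  set Db : ℝ := ((n + 1 : ℕ) : ℝ) ^ 2 * (C / (1 - rb)) with hDbdef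
  have hD1pos : 0 < D1 := div_pos hC (by linarith)
  have hDbpos : 0 < Db := by
    apply mul_pos
    · positivity
    · exact div_pos hC (by linarith)
  have hγ2β : (0 : ℝ) < γ ^ ((2 : ℝ) + β) := Real.rpow_pos_of_pos hγ0 _
  refine ⟨(1 + D1 + Db) / γ ^ ((2 : ℝ) + β), div_pos (by linarith) hγ2β, ?_⟩
  intro u A H _hHerm hA hH hu
  -- Cauchy bounds
  have hA' : ∀ k : ℕ, dist (A k) (A (k + 1)) ≤ C * r1 ^ k := by
    intro k
    rw [Real.dist_eq]
    calc |A k - A (k + 1)| ≤ C * γ ^ ((k : ℝ) * (1 + β)) := hA k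
    _ = C * r1 ^ k := by rw [pow_eq1]
  obtain ⟨Ainf, hAinf⟩ :=
    cauchySeq_tendsto_of_complete (cauchySeq_of_le_geometric r1 C hr1lt hA')
  have hHentry : ∀ (i j : Fin (n + 1)) (k : ℕ),
      dist (H k i j) (H (k + 1) i j) ≤ C * rb ^ k := by
    intro i j k
    rw [Real.dist_eq]
    have h1 : |(H k - H (k + 1)) i j| ≤ matNorm (H k - H (k + 1)) :=
      abs_entry_le_matNorm' _ i j
    rw [Matrix.sub_apply] at h1
    calc |H k i j - H (k + 1) i j| ≤ matNorm (H k - H (k + 1)) := h1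
    _ ≤ C * γ ^ ((k : ℝ) * β) := hH k
    _ = C * rb ^ k := by rw [pow_eq1]
  have hHc : ∀ i j : Fin (n + 1), ∃ a : ℝ,
      Filter.Tendsto (fun k => H k i j) Filter.atTop (nhds a) := fun i j =>
    cauchySeq_tendsto_of_complete (cauchySeq_of_le_geometric rb C hrblt (hHentry i j))
  choose Hf hHf using hHc
  refine ⟨Ainf, Matrix.of Hf, hAinf, ?_, ?_⟩
  · exact tendsto_pi_nhds.2 fun i => tendsto_pi_nhds.2 fun j => hHf i j
  -- tail bounds
  have tailA : ∀ k : ℕ, |A k - Ainf| ≤ D1 * r1 ^ k := by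
    intro k
    have h := dist_le_of_le_geometric_of_tendsto r1 C hr1lt hA' hAinf k
    rw [Real.dist_eq] at h
    calc |A k - Ainf| ≤ C * r1 ^ k / (1 - r1) := h
    _ = D1 * r1 ^ k := by rw [hD1def]; ring
  have tailH : ∀ k : ℕ, matNorm (H k - Matrix.of Hf) ≤ Db * rb ^ k := by
    intro k
    have hij : ∀ i j : Fin (n + 1), |H k i j - Hf i j| ≤ C * rb ^ k / (1 - rb) := by
      intro i j
      have h := dist_le_of_le_geometric_of_tendsto rb C hrblt (hHentry i j) (hHf i j) k
      rwa [Real.dist_eq] at h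
    calc matNorm (H k - Matrix.of Hf)
        = ∑ i, ∑ j, |H k i j - Hf i j| := by
          simp [matNorm, Matrix.sub_apply, Matrix.of_apply]
    _ ≤ ∑ i : Fin (n + 1), ∑ j : Fin (n + 1), C * rb ^ k / (1 - rb) :=
        Finset.sum_le_sum fun i _ => Finset.sum_le_sum fun j _ => hij i j
    _ = Db * rb ^ k := by
        simp [Finset.sum_const, hDbdef]
        ring
  -- main estimate
  intro z hz
  set d : ℝ := ‖z.1‖ + Real.sqrt |z.2| with hddef
  have hxpos : 0 < ‖z.1‖ := by
    have h0 : z.1 ≠ 0 := by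
      intro h
      have := hz.1.2
      rw [h] at this
      simp at this
    exact norm_pos_iff.2 h0
  have hd0 : 0 < d := by
    have := Real.sqrt_nonneg |z.2|
    simp only [hddef]; linarith
  have hx_le_d : ‖z.1‖ ≤ d := le_add_of_nonneg_right (Real.sqrt_nonneg _)
  -- choose a good cylinder index
  have key : ∃ k : ℕ, z ∈ Qplus n (γ ^ k) ∧ (γ : ℝ) ^ k ≤ d / γ := by
    by_cases hdγ : γ ≤ d
    · refine ⟨0, by simpa [pow_zero] using hz, ?_⟩
      rw [pow_zero]
      exact (one_le_div hγ0).2 hdγ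
    · push_neg at hdγ
      have hex : ∃ k : ℕ, γ ^ k ≤ d := by
        obtain ⟨k, hk⟩ := exists_pow_lt_of_lt_one hd0 hγ1
        exact ⟨k, hk.le⟩
      set k0 := Nat.find hex with hk0def
      have hspec : γ ^ k0 ≤ d := Nat.find_spec hex
      have hk0ne : k0 ≠ 0 := by
        intro h
        rw [h, pow_zero] at hspec
        linarith
      have hmin : ¬ γ ^ (k0 - 1) ≤ d := Nat.find_min hex (Nat.sub_lt (Nat.pos_of_ne_zero hk0ne) one_pos)
      push_neg at hmin
      refine ⟨k0 - 1, ?_, ?_⟩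
      · obtain ⟨⟨_, hlast⟩, ht1, ht2⟩ := hz
        refine ⟨⟨lt_of_le_of_lt hx_le_d hmin, hlast⟩, ?_, ht2⟩
        have hsq : Real.sqrt |z.2| < γ ^ (k0 - 1) := by
          have := Real.sqrt_nonneg |z.2|
          have h2 : Real.sqrt |z.2| ≤ d := le_add_of_nonneg_left (norm_nonneg _)
          linarith
        have habs : |z.2| < (γ ^ (k0 - 1)) ^ 2 :=
          (Real.sqrt_lt' (pow_pos hγ0 _)).1 hsq
        have hzneg : |z.2| = -z.2 := abs_of_nonpos ht2
        linarith [habs, hzneg ▸ habs]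
      · have hmul : γ * γ ^ (k0 - 1) ≤ d := by
          rw [← pow_succ']
          have : k0 - 1 + 1 = k0 := Nat.succ_pred_eq_of_pos (Nat.pos_of_ne_zero hk0ne)
          rwa [this]
        rw [le_div_iff₀ hγ0, mul_comm]
        exact hmul
  obtain ⟨k, hzk, hk⟩ := key
  set s : ℝ := (γ : ℝ) ^ k with hsdef
  have hs0 : 0 < s := pow_pos hγ0 k
  have hxs : ‖z.1‖ < s := hzk.1.1
  -- three error terms
  have e1 : |u z - A k * z.1 (Fin.last n) - qform (H k) z.1| ≤ s ^ ((2 : ℝ) + β) := by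
    have h := hu k z hzk
    rwa [pow_eq2] at h
  have e2 : |(A k - Ainf) * z.1 (Fin.last n)| ≤ D1 * s ^ ((2 : ℝ) + β) := by
    rw [abs_mul]
    have h1 : |A k - Ainf| ≤ D1 * s ^ ((1 : ℝ) + β) := by
      have := tailA k
      rwa [hr1def, ← pow_eq1, pow_eq2] at this
    have h2 : |z.1 (Fin.last n)| ≤ s := (abs_coord_le_norm' z.1 _).trans hxs.le
    calc |A k - Ainf| * |z.1 (Fin.last n)|
        ≤ (D1 * s ^ ((1 : ℝ) + β)) * s :=
          mul_le_mul h1 h2 (abs_nonneg _) (by positivity)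
    _ = D1 * (s ^ ((1 : ℝ) + β) * s ^ ((1 : ℝ))) := by rw [Real.rpow_one]; ring
    _ = D1 * s ^ ((2 : ℝ) + β) := by
        rw [← Real.rpow_add hs0]; ring_nf
  have e3 : |qform (H k) z.1 - qform (Matrix.of Hf) z.1| ≤ Db * s ^ ((2 : ℝ) + β) := by
    rw [← qform_sub']
    have h1 : matNorm (H k - Matrix.of Hf) ≤ Db * s ^ (β : ℝ) := by
      have := tailH k
      rwa [hrbdef, ← pow_eq1, pow_eq2] at this
    have h2 : ‖z.1‖ ^ 2 ≤ s ^ 2 := by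
      apply sq_le_sq' <;> nlinarith [norm_nonneg z.1]
    calc |qform (H k - Matrix.of Hf) z.1|
        ≤ matNorm (H k - Matrix.of Hf) * ‖z.1‖ ^ 2 := abs_qform_le' _ _
    _ ≤ (Db * s ^ (β : ℝ)) * s ^ 2 := by
        apply mul_le_mul h1 h2 (by positivity)
        positivity
    _ = Db * (s ^ (β : ℝ) * s ^ ((2 : ℕ) : ℝ)) := by rw [Real.rpow_natCast]; ring
    _ = Db * s ^ ((2 : ℝ) + β) := by
        rw [← Real.rpow_add hs0]; norm_num [add_comm]
  have total : |u z - Ainf * z.1 (Fin.last n) - qform (Matrix.of Hf) z.1|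
      ≤ (1 + D1 + Db) * s ^ ((2 : ℝ) + β) := by
    have hid : u z - Ainf * z.1 (Fin.last n) - qform (Matrix.of Hf) z.1
        = (u z - A k * z.1 (Fin.last n) - qform (H k) z.1)
          + (A k - Ainf) * z.1 (Fin.last n)
          + (qform (H k) z.1 - qform (Matrix.of Hf) z.1) := by ring
    rw [hid]
    have habc : ∀ a b c : ℝ, |a + b + c| ≤ |a| + |b| + |c| := fun a b c =>
      (abs_add_le _ _).trans (add_le_add_left (abs_add_le _ _) _)
    have hsum := habc (u z - A k * z.1 (Fin.last n) - qform (H k) z.1)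
      ((A k - Ainf) * z.1 (Fin.last n)) (qform (H k) z.1 - qform (Matrix.of Hf) z.1)
    have hexp : (1 + D1 + Db) * s ^ ((2 : ℝ) + β)
        = s ^ ((2 : ℝ) + β) + D1 * s ^ ((2 : ℝ) + β) + Db * s ^ ((2 : ℝ) + β) := by ring
    rw [hexp]
    linarith
  have hfin : s ^ ((2 : ℝ) + β) ≤ d ^ ((2 : ℝ) + β) / γ ^ ((2 : ℝ) + β) := by
    calc s ^ ((2 : ℝ) + β) ≤ (d / γ) ^ ((2 : ℝ) + β) :=
        Real.rpow_le_rpow hs0.le hk (by linarith)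
    _ = d ^ ((2 : ℝ) + β) / γ ^ ((2 : ℝ) + β) := Real.div_rpow hd0.le hγ0.le _
  calc |u z - Ainf * z.1 (Fin.last n) - qform (Matrix.of Hf) z.1|
      ≤ (1 + D1 + Db) * s ^ ((2 : ℝ) + β) := total
  _ ≤ (1 + D1 + Db) * (d ^ ((2 : ℝ) + β) / γ ^ ((2 : ℝ) + β)) := by
      apply mul_le_mul_of_nonneg_left hfin (by positivity)
  _ = (1 + D1 + Db) / γ ^ ((2 : ℝ) + β) * d ^ ((2 : ℝ) + β) := by ring

end
end
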